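/- For a uniformly random permutation σ of {0,…,N−1}, with M(σ) the least m ≥ 1 such that ∃ j < m with σ(j) < m, the expected value satisfies E[M] = Σ_{m=0}^{⌊N/2⌋} ((N−m)!)² / ((N−2m)! · N!). -/

import Mathlib

set_option linter.unusedSectionVars false
section Counting

variable {α : Type*} [Fintype α] [DecidableEq α]

private lemma perm_image_eq' {s u : Finset α} (h : s.card = u.card) (σ : Equiv.Perm α)
    (hσ : ∀ a ∈ s, σ a ∈ u) : s.image σ = u := by
  apply Finset.eq_of_subset_of_card_le
  · intro x hx
    obtain ⟨a, ha, rfl⟩ := Finset.mem_image.mp hx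
    exact hσ a ha
  · rw [Finset.card_image_of_injective s σ.injective, h]

private lemma perm_compl_maps' {s u : Finset α} (h : s.card = u.card) (σ : Equiv.Perm α)
    (hσ : ∀ a ∈ s, σ a ∈ u) : ∀ a ∉ s, σ a ∉ u := by
  intro a ha hu
  rw [← perm_image_eq' h σ hσ] at hu
  obtain ⟨b, hb, hba⟩ := Finset.mem_image.mp hu
  exact ha (σ.injective hba ▸ hb)

private noncomputable def permMapsEquiv' (s u : Finset α) (h : s.card = u.card) :
    {σ : Equiv.Perm α // ∀ a ∈ s, σ a ∈ u} ≃
      (({a // a ∈ s} ≃ {a // a ∈ u}) × ({a // a ∉ s} ≃ {a // a ∉ u})) where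
  toFun σ :=
    ⟨Equiv.ofBijective (fun x => (⟨σ.1 x.1, σ.2 x.1 x.2⟩ : {a // a ∈ u}))
      ((Fintype.bijective_iff_injective_and_card _).mpr
        ⟨fun a b hab => Subtype.ext (σ.1.injective (congrArg Subtype.val hab)),
          by simp [Fintype.card_coe, h]⟩),
     Equiv.ofBijective (fun x => (⟨σ.1 x.1, perm_compl_maps' h σ.1 σ.2 x.1 x.2⟩ : {a // a ∉ u}))
      ((Fintype.bijective_iff_injective_and_card _).mpr
        ⟨fun a b hab => Subtype.ext (σ.1.injective (congrArg Subtype.val hab)),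
          by simp [Fintype.card_subtype_compl, Fintype.card_coe, h]⟩)⟩
  invFun e :=
    ⟨Equiv.ofBijective (fun a => if ha : a ∈ s then (e.1 ⟨a, ha⟩ : α) else (e.2 ⟨a, ha⟩ : α))
      (Finite.injective_iff_bijective.mp (by
        intro a b hab
        by_cases ha : a ∈ s <;> by_cases hb : b ∈ s <;> simp [ha, hb] at hab
        · exact hab
        · exact absurd ((e.1 ⟨a, ha⟩).2) (hab ▸ (e.2 ⟨b, hb⟩).2)
        · exact absurd ((e.1 ⟨b, hb⟩).2) (hab ▸ (e.2 ⟨a, ha⟩).2)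
        · exact congrArg Subtype.val (e.2.injective (Subtype.ext hab)))),
     by
      intro a ha
      simp only [Equiv.ofBijective_apply, dif_pos ha]
      exact (e.1 ⟨a, ha⟩).2⟩
  left_inv σ := by
    apply Subtype.ext
    apply Equiv.ext
    intro a
    by_cases ha : a ∈ s <;> simp [ha]
  right_inv e := by
    apply Prod.ext <;> apply Equiv.ext <;> intro x <;> apply Subtype.ext <;>
      simp [x.2]

private lemma card_perm_maps' (s u : Finset α) (h : s.card = u.card) :
    Fintype.card {σ : Equiv.Perm α // ∀ a ∈ s, σ a ∈ u}
      = Nat.factorial s.card * Nat.factorial (Fintype.card α - s.card) := by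
  rw [Fintype.card_congr (permMapsEquiv' s u h), Fintype.card_prod]
  rw [Fintype.card_equiv (Fintype.equivOfCardEq (by simp [Fintype.card_coe, h])),
    Fintype.card_equiv (Fintype.equivOfCardEq (by
      simp [Fintype.card_subtype_compl, Fintype.card_coe, h]))]
  simp [Fintype.card_coe, Fintype.card_subtype_compl]

private lemma card_perm_maps_to' (s t : Finset α) :
    (Finset.univ.filter fun σ : Equiv.Perm α => ∀ a ∈ s, σ a ∈ t).card
      = t.card.choose s.card * Nat.factorial s.card
          * Nat.factorial (Fintype.card α - s.card) := by
  rw [Finset.card_eq_sum_card_fiberwise (f := fun σ : Equiv.Perm α => s.image σ)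
    (t := t.powersetCard s.card) (fun σ hσ => by
      rw [Finset.mem_coe, Finset.mem_powersetCard]
      refine ⟨fun x hx => ?_, Finset.card_image_of_injective s σ.injective⟩
      obtain ⟨a, ha, rfl⟩ := Finset.mem_image.mp hx
      exact (Finset.mem_filter.mp hσ).2 a ha)]
  have key : ∀ u ∈ t.powersetCard s.card,
      ((Finset.univ.filter fun σ : Equiv.Perm α => ∀ a ∈ s, σ a ∈ t).filter
        fun σ : Equiv.Perm α => s.image σ = u).card
      = Nat.factorial s.card * Nat.factorial (Fintype.card α - s.card) := by
    intro u hu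
    obtain ⟨hut, huc⟩ := Finset.mem_powersetCard.mp hu
    have hcard : s.card = u.card := huc.symm
    have heq : ((Finset.univ.filter fun σ : Equiv.Perm α => ∀ a ∈ s, σ a ∈ t).filter
        fun σ : Equiv.Perm α => s.image σ = u)
        = Finset.univ.filter fun σ : Equiv.Perm α => ∀ a ∈ s, σ a ∈ u := by
      ext σ
      simp only [Finset.mem_filter, Finset.mem_univ, true_and]
      constructor
      · rintro ⟨-, h2⟩ a ha
        exact h2 ▸ Finset.mem_image_of_mem σ ha
      · intro hσ
        exact ⟨fun a ha => hut (hσ a ha), perm_image_eq' hcard σ hσ⟩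
    rw [heq, ← Fintype.card_subtype, card_perm_maps' s u hcard]
  rw [Finset.sum_congr rfl key, Finset.sum_const, Finset.card_powersetCard, smul_eq_mul,
    mul_assoc]

end Counting

private lemma card_lt_filter (N m : ℕ) (hm : m ≤ N) :
    (Finset.univ.filter fun j : Fin N => (j : ℕ) < m).card = m := by
  have h : (Finset.univ.filter fun j : Fin N => (j : ℕ) < m)
      = (Finset.range m).attachFin (fun x hx => lt_of_lt_of_le (Finset.mem_range.mp hx) hm) := by
    ext a; simp [Finset.mem_attachFin]
  rw [h, Finset.card_attachFin, Finset.card_range]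

private lemma card_ge_filter (N m : ℕ) (hm : m ≤ N) :
    (Finset.univ.filter fun j : Fin N => m ≤ (j : ℕ)).card = N - m := by
  have h := Finset.card_filter_add_card_filter_not
    (s := (Finset.univ : Finset (Fin N))) (p := fun j : Fin N => (j : ℕ) < m)
  simp only [not_lt] at h
  have h2 := card_lt_filter N m hm
  simp only [Finset.card_univ, Fintype.card_fin] at h
  omega

private lemma msInf_lt_iff (N : ℕ) (hN : 2 ≤ N) (σ : Equiv.Perm (Fin N)) (m : ℕ) :
    m < sInf {m : ℕ | 1 ≤ m ∧ ∃ j : Fin N, (j : ℕ) < m ∧ (σ j : ℕ) < m}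
      ↔ ∀ j : Fin N, (j : ℕ) < m → m ≤ (σ j : ℕ) := by
  have hne : {m : ℕ | 1 ≤ m ∧ ∃ j : Fin N, (j : ℕ) < m ∧ (σ j : ℕ) < m}.Nonempty :=
    ⟨N, by omega, ⟨0, by omega⟩, by simp; omega, (σ _).isLt⟩
  constructor
  · intro h j hj
    by_contra hc
    push_neg at hc
    have hmem : m ∈ {m : ℕ | 1 ≤ m ∧ ∃ j : Fin N, (j : ℕ) < m ∧ (σ j : ℕ) < m} :=
      ⟨by omega, j, hj, hc⟩
    exact absurd (Nat.sInf_le hmem) (by omega)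
  · intro h
    by_contra h'
    push_neg at h'
    obtain ⟨h1, j, hj, hσj⟩ := Nat.sInf_mem hne
    exact absurd (h j (by omega)) (by omega)

theorem stmt_17 (N : ℕ) (hN : 2 ≤ N) :
    (∑ σ : Equiv.Perm (Fin N),
        ((sInf {m : ℕ | 1 ≤ m ∧ ∃ j : Fin N, (j : ℕ) < m ∧ (σ j : ℕ) < m} : ℕ) : ℚ))
        / (Nat.factorial N : ℚ)
      = ∑ m ∈ Finset.range (N / 2 + 1),
          ((Nat.factorial (N - m) : ℚ) * (Nat.factorial (N - m) : ℚ))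
            / ((Nat.factorial (N - 2 * m) : ℚ) * (Nat.factorial N : ℚ)) := by
  set K := N / 2 + 1 with hK
  have hKN : K ≤ N := by omega
  -- upper bound on M σ
  have hMle : ∀ σ : Equiv.Perm (Fin N),
      sInf {m : ℕ | 1 ≤ m ∧ ∃ j : Fin N, (j : ℕ) < m ∧ (σ j : ℕ) < m} ≤ K := by
    intro σ
    by_contra h
    push_neg at h
    have hall := (msInf_lt_iff N hN σ K).mp h
    have himg : (Finset.univ.filter fun j : Fin N => (j : ℕ) < K).image σ
        ⊆ Finset.univ.filter fun j : Fin N => K ≤ (j : ℕ) := by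
      intro x hx
      obtain ⟨a, ha, rfl⟩ := Finset.mem_image.mp hx
      simp only [Finset.mem_filter, Finset.mem_univ, true_and] at ha ⊢
      exact hall a ha
    have h1 := Finset.card_le_card himg
    rw [Finset.card_image_of_injective _ σ.injective, card_lt_filter N K hKN,
      card_ge_filter N K hKN] at h1
    omega
  -- rewrite each M σ as a sum of indicators
  have hind : ∀ σ : Equiv.Perm (Fin N),
      ((sInf {m : ℕ | 1 ≤ m ∧ ∃ j : Fin N, (j : ℕ) < m ∧ (σ j : ℕ) < m} : ℕ) : ℚ)
        = ∑ m ∈ Finset.range K,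
            if ∀ a ∈ (Finset.univ.filter fun j : Fin N => (j : ℕ) < m),
              σ a ∈ (Finset.univ.filter fun j : Fin N => m ≤ (j : ℕ)) then (1 : ℚ) else 0 := by
    intro σ
    have hcong : ∀ m ∈ Finset.range K,
        (if ∀ a ∈ (Finset.univ.filter fun j : Fin N => (j : ℕ) < m),
            σ a ∈ (Finset.univ.filter fun j : Fin N => m ≤ (j : ℕ)) then (1 : ℚ) else 0)
        = if m < sInf {m : ℕ | 1 ≤ m ∧ ∃ j : Fin N, (j : ℕ) < m ∧ (σ j : ℕ) < m}
            then (1 : ℚ) else 0 := by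
      intro m _
      refine if_congr ?_ rfl rfl
      rw [msInf_lt_iff N hN σ m]
      simp only [Finset.mem_filter, Finset.mem_univ, true_and]
    rw [Finset.sum_congr rfl hcong, Finset.sum_boole]
    have hfil : (Finset.range K).filter
        (fun m => m < sInf {m : ℕ | 1 ≤ m ∧ ∃ j : Fin N, (j : ℕ) < m ∧ (σ j : ℕ) < m})
        = Finset.range (sInf {m : ℕ | 1 ≤ m ∧ ∃ j : Fin N, (j : ℕ) < m ∧ (σ j : ℕ) < m}) := by
      ext x
      simp only [Finset.mem_filter, Finset.mem_range]
      have := hMle σ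
      omega
    rw [hfil, Finset.card_range]
  rw [Finset.sum_congr rfl fun σ _ => hind σ, Finset.sum_comm]
  rw [Finset.sum_div]
  refine Finset.sum_congr rfl fun m hm => ?_
  have hmK : m ≤ N / 2 := by
    have := Finset.mem_range.mp hm
    omega
  have h2m : 2 * m ≤ N := by omega
  have hmN : m ≤ N := by omega
  rw [Finset.sum_boole]
  have hcount := card_perm_maps_to' (α := Fin N)
    (Finset.univ.filter fun j : Fin N => (j : ℕ) < m)
    (Finset.univ.filter fun j : Fin N => m ≤ (j : ℕ))
  rw [card_lt_filter N m hmN, card_ge_filter N m hmN, Fintype.card_fin] at hcount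
  rw [Finset.filter_congr_decidable] at hcount ⊢
  rw [hcount]
  -- now arithmetic
  have hfac : (N - m).choose m * Nat.factorial m * Nat.factorial (N - m - m)
      = Nat.factorial (N - m) :=
    Nat.choose_mul_factorial_mul_factorial (by omega)
  have hfacQ : ((N - m).choose m : ℚ) * (Nat.factorial m : ℚ) * (Nat.factorial (N - 2 * m) : ℚ)
      = (Nat.factorial (N - m) : ℚ) := by
    have : N - m - m = N - 2 * m := by omega
    rw [← this]
    exact_mod_cast congrArg (Nat.cast : ℕ → ℚ) hfac
  have hN0 : (Nat.factorial N : ℚ) ≠ 0 := Nat.cast_ne_zero.mpr (Nat.factorial_ne_zero N)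
  have h2m0 : (Nat.factorial (N - 2 * m) : ℚ) ≠ 0 :=
    Nat.cast_ne_zero.mpr (Nat.factorial_ne_zero _)
  rw [div_eq_div_iff hN0 (mul_ne_zero h2m0 hN0)]
  push_cast
  linear_combination ((Nat.factorial (N - m) : ℚ) * (Nat.factorial N : ℚ)) * hfacQ
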